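/- Let n ≥ 3 and let L ⊆ {1, …, n}. Work in ℝ[x_1, …, x_n, (y_ℓ)_{ℓ∈L}], with z_ℓ = x_ℓ + y_ℓ for ℓ ∈ L and z_ℓ = x_ℓ otherwise. Consider the 2n polynomials: e_m(z_1, …, z_n) for m = 1, …, n−1; e_n(z_1, …, z_n) − x_1 x_2 ⋯ x_n; the constant 1; and e_j(z_2, …, z_n) for j = 1, …, n−1, where e_m denotes the m-th elementary symmetric polynomial in the listed arguments. Then the Jacobian matrix of this family with respect to the n+|L| variables, viewed over the field of rational functions in those variables, has rank n+|L| if and only if |L| ≤ 1. -/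

import Mathlib

open Finset MvPolynomial

/-- The `m`-th elementary symmetric polynomial of the values `v i` for `i ∈ s`. -/
noncomputable def esymOn {σ R : Type*} [CommSemiring R] (s : Finset σ) (m : ℕ) (v : σ → R) : R :=
  ∑ t ∈ Finset.powersetCard m s, ∏ i ∈ t, v i

/-- In `ℝ[x₁, …, xₙ, (y_ℓ)_{ℓ ∈ L}]`: `z_ℓ = x_ℓ + y_ℓ` if `ℓ ∈ L` and `z_ℓ = x_ℓ`
otherwise. -/
noncomputable def z9 (n : ℕ) (L : Finset (Fin n)) (ℓ : Fin n) :
    MvPolynomial (Fin n ⊕ {i : Fin n // i ∈ L}) ℝ :=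
  X (Sum.inl ℓ) + if h : ℓ ∈ L then X (Sum.inr ⟨ℓ, h⟩) else 0

/-- The `2n` coefficients of the input-output equation of the `n`-compartment cycle model
with input and output in compartment `1` and leak set `L`:
`e₁(z), …, e_{n-1}(z)`, `eₙ(z) - x₁⋯xₙ`, the constant `1`, and
`eⱼ(z₂, …, zₙ)` for `j = 1, …, n-1`. -/
noncomputable def coeffs9 (n : ℕ) (L : Finset (Fin n)) (m : Fin (2 * n)) :
    MvPolynomial (Fin n ⊕ {i : Fin n // i ∈ L}) ℝ :=
  if m.1 < n - 1 then esymOn Finset.univ (m.1 + 1) (z9 n L)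
  else if m.1 = n - 1 then
    esymOn Finset.univ n (z9 n L) - ∏ i : Fin n, X (Sum.inl i)
  else if m.1 = n then 1
  else esymOn (Finset.univ.filter (fun i : Fin n => 1 ≤ i.1)) (m.1 - n) (z9 n L)

/-! ### Auxiliary lemmas -/

@[simp] lemma esymOn_zero {σ R : Type*} [CommSemiring R] (s : Finset σ) (v : σ → R) :
    esymOn s 0 v = 1 := by
  simp [esymOn]

lemma esymOn_of_card_lt {σ R : Type*} [CommSemiring R] {s : Finset σ} {m : ℕ} (h : s.card < m)
    (v : σ → R) : esymOn s m v = 0 := by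
  rw [esymOn, Finset.powersetCard_eq_empty.2 h, Finset.sum_empty]

lemma esymOn_map {σ R S : Type*} [CommSemiring R] [CommSemiring S] (f : R →+* S) (s : Finset σ)
    (m : ℕ) (v : σ → R) : f (esymOn s m v) = esymOn s m (fun i => f (v i)) := by
  simp [esymOn, map_sum, map_prod]

lemma esymOn_insert {σ R : Type*} [CommSemiring R] [DecidableEq σ] {a : σ} {s : Finset σ}
    (h : a ∉ s) (m : ℕ) (v : σ → R) :
    esymOn (insert a s) (m + 1) v = esymOn s (m + 1) v + v a * esymOn s m v := by
  rw [esymOn, Finset.powersetCard_succ_insert h, Finset.sum_union, Finset.sum_image]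
  · rw [esymOn, esymOn, Finset.mul_sum]
    congr 1
    refine Finset.sum_congr rfl fun t ht => ?_
    have hat : a ∉ t := fun hc => h ((Finset.mem_powersetCard.1 ht).1 hc)
    rw [Finset.prod_insert hat]
  · intro t ht u hu hi
    have hat : a ∉ t := fun hc => h ((Finset.mem_powersetCard.1 ht).1 hc)
    have hau : a ∉ u := fun hc => h ((Finset.mem_powersetCard.1 hu).1 hc)
    have := congrArg (Finset.erase · a) hi
    simpa [Finset.erase_insert, hat, hau] using this
  · refine Finset.disjoint_left.2 fun t ht hti => ?_
    obtain ⟨u, hu, rfl⟩ := Finset.mem_image.1 hti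
    exact h ((Finset.mem_powersetCard.1 ht).1 (Finset.mem_insert_self a u))

lemma prod_add_esymOn {σ R : Type*} [CommRing R] (s : Finset σ) (v : σ → R) (x : R) :
    ∏ i ∈ s, (v i + x) = ∑ j ∈ Finset.range (s.card + 1), esymOn s j v * x ^ (s.card - j) := by
  classical
  induction s using Finset.induction_on with
  | empty => simp
  | insert _ _ ha ih =>
    rename_i a s
    rw [Finset.prod_insert ha, ih, Finset.card_insert_of_notMem ha]
    rw [Finset.sum_range_succ' (fun j => esymOn (insert a s) j v * x ^ (s.card + 1 - j)) (s.card + 1)]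
    simp only [esymOn_zero, one_mul, Nat.sub_zero]
    have key : ∀ j ∈ Finset.range (s.card + 1),
        esymOn (insert a s) (j + 1) v * x ^ (s.card + 1 - (j + 1)) =
          esymOn s (j + 1) v * x ^ (s.card - j) + v a * (esymOn s j v * x ^ (s.card - j)) := by
      intro j hj
      rw [esymOn_insert ha, add_mul, Nat.succ_sub_succ, mul_assoc]
    rw [Finset.sum_congr rfl key, Finset.sum_add_distrib, ← Finset.mul_sum]
    have h2 : ∑ j ∈ Finset.range (s.card + 1), esymOn s (j + 1) v * x ^ (s.card - j) + x ^ (s.card + 1)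
        = x * ∑ j ∈ Finset.range (s.card + 1), esymOn s j v * x ^ (s.card - j) := by
      rw [Finset.mul_sum]
      rw [Finset.sum_range_succ (fun j => esymOn s (j + 1) v * x ^ (s.card - j))]
      rw [esymOn_of_card_lt (Nat.lt_succ_self _), zero_mul, add_zero]
      rw [Finset.sum_range_succ' (fun j => x * (esymOn s j v * x ^ (s.card - j))) s.card]
      simp only [esymOn_zero, one_mul, Nat.sub_zero, Nat.sub_self, pow_zero, mul_one]
      congr 1
      · refine Finset.sum_congr rfl fun j hj => ?_
        rw [Finset.mem_range] at hj
        have : s.card - j = (s.card - (j+1)) + 1 := by omega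
        rw [this, pow_succ]
        ring
      · rw [← pow_succ']
    rw [add_mul, ← h2]
    ring

lemma derivation_finset_prod {σ R A : Type*} [DecidableEq σ] [CommRing R] [CommRing A] [Algebra R A]
    (D : Derivation R A A) (s : Finset σ) (f : σ → A) :
    D (∏ i ∈ s, f i) = ∑ i ∈ s, D (f i) * ∏ j ∈ s.erase i, f j := by
  induction s using Finset.induction_on with
  | empty => simp
  | insert _ _ ha ih =>
    rename_i a s
    rw [Finset.prod_insert ha, D.leibniz, smul_eq_mul, smul_eq_mul, ih, Finset.sum_insert ha,
      Finset.erase_insert ha, Finset.mul_sum]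
    rw [add_comm]
    congr 1
    · ring
    refine Finset.sum_congr rfl fun i hi => ?_
    have hai : a ≠ i := fun h => ha (h ▸ hi)
    rw [show (insert a s).erase i = insert a (s.erase i) from Finset.erase_insert_of_ne hai,
      Finset.prod_insert (fun h => ha (Finset.mem_of_mem_erase h))]
    ring

lemma derivation_esymOn {σ R A : Type*} [DecidableEq σ] [CommRing R] [CommRing A] [Algebra R A]
    (D : Derivation R A A) (s : Finset σ) (m : ℕ) (v : σ → A) :
    D (esymOn s (m + 1) v) = ∑ i ∈ s, D (v i) * esymOn (s.erase i) m v := by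
  rw [esymOn, map_sum]
  have e1 : ∀ t ∈ Finset.powersetCard (m+1) s, D (∏ i ∈ t, v i)
      = ∑ i ∈ t, D (v i) * ∏ j ∈ t.erase i, v j := fun t _ => derivation_finset_prod D t v
  rw [Finset.sum_congr rfl e1]
  rw [← Finset.sum_sigma (Finset.powersetCard (m+1) s) (fun t => t)
    (fun p => D (v p.2) * ∏ j ∈ p.1.erase p.2, v j)]
  have e2 : ∀ i ∈ s, D (v i) * esymOn (s.erase i) m v
      = ∑ t ∈ Finset.powersetCard m (s.erase i), D (v i) * ∏ j ∈ t, v j := by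
    intro i _
    rw [esymOn, Finset.mul_sum]
  rw [Finset.sum_congr rfl e2]
  rw [← Finset.sum_sigma s (fun i => Finset.powersetCard m (s.erase i))
    (fun p => D (v p.1) * ∏ j ∈ p.2, v j)]
  refine Finset.sum_nbij' (i := fun p => ⟨p.2, p.1.erase p.2⟩)
    (j := fun q => ⟨insert q.1 q.2, q.1⟩) ?_ ?_ ?_ ?_ ?_
  · rintro ⟨t, i⟩ hp
    simp only [Finset.mem_sigma, Finset.mem_powersetCard] at hp ⊢
    obtain ⟨ht, hi⟩ := hp
    refine ⟨ht.1 hi, ?_, ?_⟩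
    · intro j hj
      exact Finset.mem_erase.2 ⟨(Finset.mem_erase.1 hj).1, ht.1 (Finset.mem_of_mem_erase hj)⟩
    · rw [Finset.card_erase_of_mem hi, ht.2]
      omega
  · rintro ⟨i, t⟩ hq
    simp only [Finset.mem_sigma, Finset.mem_powersetCard] at hq ⊢
    obtain ⟨hi, ht, hc⟩ := hq
    have hit : i ∉ t := fun h => Finset.notMem_erase i s (ht h)
    constructor
    · constructor
      · intro j hj
        rcases Finset.mem_insert.1 hj with rfl | hj
        · exact hi
        · exact Finset.mem_of_mem_erase (ht hj)
      · rw [Finset.card_insert_of_notMem hit, hc]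
    · exact Finset.mem_insert_self _ _
  · rintro ⟨t, i⟩ hp
    simp only [Finset.mem_sigma, Finset.mem_powersetCard] at hp
    have : insert i (t.erase i) = t := Finset.insert_erase hp.2
    simp [this]
  · rintro ⟨i, t⟩ hq
    simp only [Finset.mem_sigma, Finset.mem_powersetCard] at hq
    have hit : i ∉ t := fun h => Finset.notMem_erase i s (hq.2.1 h)
    simp [Finset.erase_insert hit]
  · rintro ⟨t, i⟩ _
    rfl

lemma vdm_step {α : Type*} [DecidableEq α] {S : Finset α} {u b : α → ℝ}
    (hu : Set.InjOn u S)
    (h : ∀ j < S.card, ∑ k ∈ S, b k * esymOn (S.erase k) j u = 0) :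
    ∀ s ∈ S, b s = 0 := by
  intro s hs
  have key : ∑ k ∈ S, b k * ∏ r ∈ S.erase k, (u r - u s) = 0 := by
    have h1 : ∑ j ∈ Finset.range S.card,
        (-u s) ^ (S.card - 1 - j) * ∑ k ∈ S, b k * esymOn (S.erase k) j u = 0 := by
      refine Finset.sum_eq_zero fun j hj => ?_
      rw [h j (Finset.mem_range.1 hj), mul_zero]
    rw [← h1]
    simp_rw [Finset.mul_sum]
    rw [Finset.sum_comm]
    refine Finset.sum_congr rfl fun k hk => ?_
    have hcard : (S.erase k).card = S.card - 1 := Finset.card_erase_of_mem hk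
    have hS : 1 ≤ S.card := Finset.card_pos.2 ⟨k, hk⟩
    have : ∏ r ∈ S.erase k, (u r - u s) = ∏ r ∈ S.erase k, (u r + (-u s)) := by
      simp [sub_eq_add_neg]
    rw [this, prod_add_esymOn, hcard, Finset.mul_sum]
    have hrange : S.card - 1 + 1 = S.card := by omega
    rw [hrange]
    refine Finset.sum_congr rfl fun j hj => ?_
    ring
  have hzero : ∀ k ∈ S, k ≠ s → b k * ∏ r ∈ S.erase k, (u r - u s) = 0 := by
    intro k hk hks
    rw [Finset.prod_eq_zero (Finset.mem_erase.2 ⟨Ne.symm hks, hs⟩) (sub_self (u s)), mul_zero]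
  rw [← Finset.add_sum_erase _ _ hs] at key
  rw [Finset.sum_eq_zero
    (fun k hk => hzero k (Finset.mem_of_mem_erase hk) (Finset.ne_of_mem_erase hk)), add_zero] at key
  have hprod : ∏ r ∈ S.erase s, (u r - u s) ≠ 0 := by
    refine Finset.prod_ne_zero_iff.2 fun r hr => ?_
    exact sub_ne_zero.2 fun hc => (Finset.ne_of_mem_erase hr) (hu (Finset.mem_of_mem_erase hr) hs hc)
  exact (mul_eq_zero.1 key).resolve_right hprod

/-- The compartment of a variable. -/
def cmp9 {n : ℕ} {L : Finset (Fin n)} : (Fin n ⊕ {i : Fin n // i ∈ L}) → Fin n :=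
  Sum.elim id Subtype.val

lemma pderiv_z9 {n : ℕ} {L : Finset (Fin n)} (w : Fin n ⊕ {i : Fin n // i ∈ L}) (j : Fin n) :
    pderiv w (z9 n L j) = if cmp9 w = j then 1 else 0 := by
  cases w with
  | inl i =>
    by_cases h : j ∈ L <;> by_cases hij : i = j <;>
      simp [z9, cmp9, pderiv_X, Pi.single_apply, h, hij]
  | inr x =>
    by_cases h : j ∈ L
    · by_cases hx : x.1 = j
      · have : x = ⟨j, h⟩ := Subtype.ext hx
        simp [z9, cmp9, pderiv_X, Pi.single_apply, h, hx, this]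
      · have : ¬ ((⟨j, h⟩ : {i : Fin n // i ∈ L}) = x) := fun hc => hx (by rw [← hc])
        simp [z9, cmp9, pderiv_X, Pi.single_apply, h, hx, Ne.symm, this]
    · have : x.1 ≠ j := fun hc => h (hc ▸ x.2)
      simp [z9, cmp9, pderiv_X, Pi.single_apply, h, this]

lemma pderiv_esymOn_z9 {n : ℕ} {L : Finset (Fin n)} (w : Fin n ⊕ {i : Fin n // i ∈ L})
    (s : Finset (Fin n)) {m : ℕ} (hm : 1 ≤ m) :
    pderiv w (esymOn s m (z9 n L)) =
      if cmp9 w ∈ s then esymOn (s.erase (cmp9 w)) (m - 1) (z9 n L) else 0 := by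
  obtain ⟨m, rfl⟩ : ∃ m', m = m' + 1 := ⟨m - 1, by omega⟩
  rw [derivation_esymOn (pderiv w) s m (z9 n L)]
  simp only [pderiv_z9, Nat.add_sub_cancel, ite_mul, one_mul, zero_mul]
  exact Finset.sum_ite_eq s (cmp9 w) (fun i => esymOn (s.erase i) m (z9 n L))

lemma pderiv_prodX9 {n : ℕ} {L : Finset (Fin n)} (w : Fin n ⊕ {i : Fin n // i ∈ L}) :
    pderiv w (∏ i : Fin n, (X (Sum.inl i) : MvPolynomial (Fin n ⊕ {i : Fin n // i ∈ L}) ℝ)) =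
      Sum.elim (fun k => ∏ j ∈ Finset.univ.erase k, (X (Sum.inl j) :
        MvPolynomial (Fin n ⊕ {i : Fin n // i ∈ L}) ℝ)) (fun _ => 0) w := by
  rw [derivation_finset_prod (pderiv w) Finset.univ (fun i => X (Sum.inl i))]
  cases w with
  | inl k =>
    simp only [Sum.elim_inl]
    have e1 : ∀ i ∈ Finset.univ, (pderiv (Sum.inl k : Fin n ⊕ {i : Fin n // i ∈ L})
          (X (Sum.inl i)) : MvPolynomial (Fin n ⊕ {i : Fin n // i ∈ L}) ℝ) *
          ∏ j ∈ Finset.univ.erase i, X (Sum.inl j)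
        = if k = i then ∏ j ∈ Finset.univ.erase i, X (Sum.inl j) else 0 := by
      intro i _
      by_cases h : k = i <;> simp [pderiv_X, Pi.single_apply, h]
    rw [Finset.sum_congr rfl e1]
    rw [Finset.sum_ite_eq Finset.univ k
      (fun i => ∏ j ∈ Finset.univ.erase i, (X (Sum.inl j) :
        MvPolynomial (Fin n ⊕ {i : Fin n // i ∈ L}) ℝ))]
    simp
  | inr x =>
    simp [pderiv_X, Pi.single_apply]

set_option maxHeartbeats 2000000 in
lemma partB {n : ℕ} (hn : 3 ≤ n) {L : Finset (Fin n)} (hL : L.card ≤ 1) :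
    (Matrix.of fun (m : Fin (2 * n)) (v : Fin n ⊕ {i : Fin n // i ∈ L}) =>
        algebraMap (MvPolynomial (Fin n ⊕ {i : Fin n // i ∈ L}) ℝ)
          (FractionRing (MvPolynomial (Fin n ⊕ {i : Fin n // i ∈ L}) ℝ))
          (pderiv v (coeffs9 n L m))).rank = n + L.card := by
  classical
  set M : Matrix (Fin (2 * n)) (Fin n ⊕ {i : Fin n // i ∈ L}) (FractionRing (MvPolynomial (Fin n ⊕ {i : Fin n // i ∈ L}) ℝ)) :=
    Matrix.of fun (m : Fin (2 * n)) (v : Fin n ⊕ {i : Fin n // i ∈ L}) =>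
      algebraMap (MvPolynomial (Fin n ⊕ {i : Fin n // i ∈ L}) ℝ) (FractionRing (MvPolynomial (Fin n ⊕ {i : Fin n // i ∈ L}) ℝ)) (pderiv v (coeffs9 n L m)) with hM
  have hcard : Fintype.card (Fin n ⊕ {i : Fin n // i ∈ L}) = n + L.card := by
    simp [Fintype.card_sum, Fintype.card_coe]
  refine le_antisymm (le_trans (Matrix.rank_le_card_width M) (le_of_eq hcard)) ?_
  -- row selection
  set rowsel : (Fin n ⊕ {i : Fin n // i ∈ L}) → Fin (2 * n) := fun r =>
    Sum.elim (fun i : Fin n => if i.1 = 0 then (⟨0, by omega⟩ : Fin (2 * n))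
        else ⟨n + i.1, by have := i.isLt; omega⟩)
      (fun _ => (⟨n - 1, by omega⟩ : Fin (2 * n))) r with hrowsel
  set J : Matrix (Fin n ⊕ {i : Fin n // i ∈ L}) (Fin n ⊕ {i : Fin n // i ∈ L}) (MvPolynomial (Fin n ⊕ {i : Fin n // i ∈ L}) ℝ) :=
    Matrix.of (fun r w => pderiv w (coeffs9 n L (rowsel r))) with hJ
  -- evaluation point
  set pt : (Fin n ⊕ {i : Fin n // i ∈ L}) → ℝ :=
    Sum.elim (fun i => (i.1 + 1 : ℝ)) (fun _ => (n : ℝ)) with hpt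
  set φ : (MvPolynomial (Fin n ⊕ {i : Fin n // i ∈ L}) ℝ) →+* ℝ := (MvPolynomial.eval pt : (MvPolynomial (Fin n ⊕ {i : Fin n // i ∈ L}) ℝ) →+* ℝ) with hφ
  set u : Fin n → ℝ := fun i => (i.1 + 1 : ℝ) + (if i ∈ L then (n : ℝ) else 0) with hu
  set S₂ : Finset (Fin n) := Finset.univ.filter (fun i : Fin n => 1 ≤ i.1) with hS₂
  set i0 : Fin n := ⟨0, by omega⟩ with hi0
  have hz : ∀ j, φ (z9 n L j) = u j := by
    intro j
    by_cases h : j ∈ L <;> simp [z9, hφ, hpt, hu, h, MvPolynomial.eval_X]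
  have hes : ∀ (s : Finset (Fin n)) (m : ℕ), φ (esymOn s m (z9 n L)) = esymOn s m u := by
    intro s m
    rw [esymOn_map]
    congr 1
    funext j
    exact hz j
  have huinj : Function.Injective u := by
    intro i j hij
    have e : (i.1:ℝ) + 1 + (if i ∈ L then (n:ℝ) else 0)
        = (j.1:ℝ) + 1 + (if j ∈ L then (n:ℝ) else 0) := hij
    have hin : (i.1 : ℝ) < n := by exact_mod_cast i.isLt
    have hjn : (j.1 : ℝ) < n := by exact_mod_cast j.isLt
    have hi0' : (0:ℝ) ≤ (i.1 : ℝ) := Nat.cast_nonneg _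
    have hj0' : (0:ℝ) ≤ (j.1 : ℝ) := Nat.cast_nonneg _
    have key : (i.1 : ℝ) = (j.1 : ℝ) := by
      by_cases hi : i ∈ L <;> by_cases hj : j ∈ L
      · rw [if_pos hi, if_pos hj] at e; linarith
      · rw [if_pos hi, if_neg hj] at e; linarith
      · rw [if_neg hi, if_pos hj] at e; linarith
      · rw [if_neg hi, if_neg hj] at e; linarith
    exact Fin.ext (by exact_mod_cast key)
  have hS2e : S₂ = Finset.univ.erase i0 := by
    ext k
    simp only [hS₂, Finset.mem_filter, Finset.mem_univ, true_and, Finset.mem_erase, and_true]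
    have hne : (k ≠ i0) ↔ k.1 ≠ 0 := by simp [Fin.ext_iff, hi0]
    rw [hne]
    omega
  have hS2card : S₂.card = n - 1 := by
    rw [hS2e, Finset.card_erase_of_mem (Finset.mem_univ _), Finset.card_univ, Fintype.card_fin]
  -- entries of the evaluated Jacobian
  have hrow0 : ∀ w, (J.map φ) (Sum.inl i0) w = 1 := by
    intro w
    have h1 : rowsel (Sum.inl i0) = ⟨0, by omega⟩ := by simp [hrowsel, hi0]
    rw [Matrix.map_apply]
    show φ (pderiv w (coeffs9 n L (rowsel (Sum.inl i0)))) = 1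
    rw [h1, coeffs9]
    rw [if_pos (show ((⟨0, by omega⟩ : Fin (2*n)) : ℕ) < n - 1 by simp; omega)]
    rw [pderiv_esymOn_z9 w _ (by omega : 1 ≤ 0 + 1)]
    simp
  have hrowj : ∀ (i : Fin n), 1 ≤ i.1 → ∀ w, (J.map φ) (Sum.inl i) w
      = if cmp9 w ∈ S₂ then esymOn (S₂.erase (cmp9 w)) (i.1 - 1) u else 0 := by
    intro i hi w
    have h1 : rowsel (Sum.inl i) = ⟨n + i.1, by have := i.isLt; omega⟩ := by
      rw [hrowsel]
      simp only [Sum.elim_inl]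
      rw [if_neg (by omega : ¬ i.1 = 0)]
    rw [Matrix.map_apply]
    show φ (pderiv w (coeffs9 n L (rowsel (Sum.inl i)))) =
      if cmp9 w ∈ S₂ then esymOn (S₂.erase (cmp9 w)) (i.1 - 1) u else 0
    rw [h1, coeffs9]
    rw [if_neg (by simp; omega), if_neg (by simp; omega), if_neg (by simp; omega)]
    have h2 : ((⟨n + i.1, by have := i.isLt; omega⟩ : Fin (2*n)) : ℕ) - n = i.1 := by
      simp
    rw [h2, pderiv_esymOn_z9 w _ hi, apply_ite φ, map_zero, hes, hS₂]
  have hrowr : ∀ (x : {i : Fin n // i ∈ L}) (w), (J.map φ) (Sum.inr x) w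
      = esymOn (Finset.univ.erase (cmp9 w)) (n - 1) u
        - Sum.elim (fun k : Fin n => ∏ j ∈ Finset.univ.erase k, ((j.1 : ℝ) + 1)) (fun _ => 0) w := by
    intro x w
    have h1 : rowsel (Sum.inr x) = ⟨n - 1, by omega⟩ := by simp [hrowsel]
    rw [Matrix.map_apply]
    show φ (pderiv w (coeffs9 n L (rowsel (Sum.inr x))))
      = esymOn (Finset.univ.erase (cmp9 w)) (n - 1) u
        - Sum.elim (fun k : Fin n => ∏ j ∈ Finset.univ.erase k, ((j.1 : ℝ) + 1)) (fun _ => 0) w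
    rw [h1, coeffs9]
    rw [if_neg (by simp), if_pos (by simp)]
    rw [map_sub, pderiv_esymOn_z9 w _ (by omega : 1 ≤ n), pderiv_prodX9]
    rw [if_pos (Finset.mem_univ _), map_sub, hes]
    congr 1
    cases w with
    | inl k =>
      simp only [Sum.elim_inl]
      rw [map_prod]
      refine Finset.prod_congr rfl fun j _ => ?_
      simp [hφ, hpt]
    | inr y =>
      simp [hφ]
  -- the evaluated Jacobian has trivial kernel
  have hker : ∀ v : (Fin n ⊕ {i : Fin n // i ∈ L}) → ℝ, (J.map φ).mulVec v = 0 → v = 0 := by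
    intro v hv
    have heq : ∀ r, ∑ w, (J.map φ) r w * v w = 0 := by
      intro r
      have := congrFun hv r
      simpa [Matrix.mulVec, dotProduct] using this
    set b : Fin n → ℝ := fun k => v (Sum.inl k) + (if h : k ∈ L then v (Sum.inr ⟨k, h⟩) else 0)
      with hb
    have GW : ∀ F : Fin n → ℝ,
        (∑ w : Fin n ⊕ {i : Fin n // i ∈ L}, F (cmp9 w) * v w) = ∑ k : Fin n, F k * b k := by
      intro F
      rw [Fintype.sum_sum_type]
      have e1 : ∀ k : Fin n, F k * b k
          = F k * v (Sum.inl k) + (if h : k ∈ L then F k * v (Sum.inr ⟨k, h⟩) else 0) := by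
        intro k
        by_cases h : k ∈ L <;> simp [hb, h, mul_add]
      rw [Finset.sum_congr rfl fun k _ => e1 k, Finset.sum_add_distrib]
      congr 1
      have e2 : ∀ x : {i : Fin n // i ∈ L}, F (cmp9 (Sum.inr x)) * v (Sum.inr x)
          = (fun k => if h : k ∈ L then F k * v (Sum.inr ⟨k, h⟩) else 0) x.1 := by
        intro x
        simp only [cmp9, Sum.elim_inr]
        rw [dif_pos x.2]
      rw [Finset.sum_congr rfl fun x _ => e2 x]
      rw [Finset.sum_coe_sort L (fun k => if h : k ∈ L then F k * v (Sum.inr ⟨k, h⟩) else 0)]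
      exact Finset.sum_subset (Finset.subset_univ L) (fun k _ hk => dif_neg hk)
    have E0 : ∑ k : Fin n, b k = 0 := by
      have h0 := heq (Sum.inl i0)
      have h1 : ∑ w : Fin n ⊕ {i : Fin n // i ∈ L}, (fun _ => (1:ℝ)) (cmp9 w) * v w = 0 :=
        (Finset.sum_congr rfl fun w _ => by rw [hrow0 w]).trans h0
      have h2 := (GW (fun _ => (1:ℝ))).symm.trans h1
      simpa using h2
    have Ej : ∀ j < S₂.card, ∑ k ∈ S₂, b k * esymOn (S₂.erase k) j u = 0 := by
      intro j hj
      have hjn : j < n - 1 := by rwa [hS2card] at hj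
      set i : Fin n := ⟨j + 1, by omega⟩ with hi
      have hi1 : 1 ≤ i.1 := by simp [hi]
      have h0 := heq (Sum.inl i)
      have h1 : ∑ w : Fin n ⊕ {i : Fin n // i ∈ L},
          (fun k => if k ∈ S₂ then esymOn (S₂.erase k) j u else 0) (cmp9 w) * v w = 0 :=
        (Finset.sum_congr rfl fun w _ => by
          rw [hrowj i hi1 w, (by simp [hi] : i.1 - 1 = j)]).trans h0
      have h1' := (GW (fun k => if k ∈ S₂ then esymOn (S₂.erase k) j u else 0)).symm.trans h1
      have h2 : ∑ k : Fin n, (if k ∈ S₂ then esymOn (S₂.erase k) j u else 0) * b k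
          = ∑ k ∈ S₂, b k * esymOn (S₂.erase k) j u := by
        simp_rw [ite_mul, zero_mul]
        rw [Finset.sum_ite_mem, Finset.univ_inter]
        exact Finset.sum_congr rfl fun k _ => mul_comm _ _
      rw [← h2]
      exact h1'
    have hbS : ∀ k ∈ S₂, b k = 0 := vdm_step (huinj.injOn) Ej
    have hb0 : b i0 = 0 := by
      have hsum2 : ∑ k ∈ Finset.univ.erase i0, b k = 0 := by
        rw [← hS2e]
        exact Finset.sum_eq_zero hbS
      have h3 := Finset.add_sum_erase Finset.univ b (Finset.mem_univ i0)
      rw [hsum2, E0, add_zero] at h3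
      exact h3
    have hball : ∀ k, b k = 0 := by
      intro k
      by_cases hk : k.1 = 0
      · have : k = i0 := Fin.ext (by simp [hi0, hk])
        rw [this]
        exact hb0
      · exact hbS k (by simp [hS₂]; omega)
    have hinl : ∀ k, k ∉ L → v (Sum.inl k) = 0 := by
      intro k hk
      have h4 := hball k
      simp only [hb] at h4
      rwa [dif_neg hk, add_zero] at h4
    rcases Finset.eq_empty_or_nonempty L with hLe | hLne
    · funext w
      cases w with
      | inl k => exact hinl k (by simp [hLe])
      | inr x => exact absurd x.2 (by simp [hLe])
    · obtain ⟨ℓ, hLs⟩ := Finset.card_eq_one.1 (le_antisymm hL (Finset.card_pos.2 hLne))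
      have hmem : ℓ ∈ L := by rw [hLs]; exact Finset.mem_singleton_self ℓ
      have hEr := heq (Sum.inr ⟨ℓ, hmem⟩)
      have h1 : ∑ w : Fin n ⊕ {i : Fin n // i ∈ L},
          ((fun k => esymOn (Finset.univ.erase k) (n-1) u) (cmp9 w) * v w
            - Sum.elim (fun k : Fin n => ∏ j ∈ Finset.univ.erase k, ((j.1:ℝ)+1))
              (fun _ => 0) w * v w) = 0 :=
        (Finset.sum_congr rfl fun w _ => by
          rw [hrowr ⟨ℓ, hmem⟩ w, sub_mul]).trans hEr
      rw [Finset.sum_sub_distrib] at h1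
      have hfirst := (GW (fun k => esymOn (Finset.univ.erase k) (n-1) u)).trans
        (Finset.sum_eq_zero fun k _ => by rw [hball k, mul_zero])
      rw [hfirst, zero_sub, neg_eq_zero] at h1
      rw [Fintype.sum_sum_type] at h1
      have h2 : ∑ x : {i : Fin n // i ∈ L},
          Sum.elim (fun k : Fin n => ∏ j ∈ Finset.univ.erase k, ((j.1:ℝ)+1))
            (fun _ : {i : Fin n // i ∈ L} => (0:ℝ)) (Sum.inr x) * v (Sum.inr x) = 0 :=
        Finset.sum_eq_zero fun x _ => by simp
      rw [h2, add_zero] at h1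
      have h3 : ∑ k : Fin n, Sum.elim (fun k : Fin n => ∏ j ∈ Finset.univ.erase k, ((j.1:ℝ)+1))
            (fun _ : {i : Fin n // i ∈ L} => (0:ℝ)) (Sum.inl k) * v (Sum.inl k)
          = (∏ j ∈ Finset.univ.erase ℓ, ((j.1:ℝ)+1)) * v (Sum.inl ℓ) := by
        refine (Finset.sum_eq_single ℓ ?_ ?_).trans ?_
        · intro k _ hkℓ
          have hknotL : k ∉ L := by rw [hLs]; simp [hkℓ]
          rw [hinl k hknotL, mul_zero]
        · intro hcon
          exact absurd (Finset.mem_univ ℓ) hcon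
        · simp
      rw [h3] at h1
      have hprodne : (∏ j ∈ Finset.univ.erase ℓ, ((j.1:ℝ)+1)) ≠ 0 :=
        Finset.prod_ne_zero_iff.2 fun j _ => by positivity
      have hvℓ : v (Sum.inl ℓ) = 0 := by
        rcases mul_eq_zero.1 h1 with h | h
        · exact absurd h hprodne
        · exact h
      have hvr : v (Sum.inr ⟨ℓ, hmem⟩) = 0 := by
        have h5 := hball ℓ
        simp only [hb] at h5
        rwa [dif_pos hmem, hvℓ, zero_add] at h5
      funext w
      cases w with
      | inl k =>
        by_cases hkl : k = ℓ
        · rw [hkl]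
          exact hvℓ
        · exact hinl k (by rw [hLs]; simp [hkl])
      | inr x =>
        have hx : x = ⟨ℓ, hmem⟩ :=
          Subtype.ext (by
            have h6 : x.1 ∈ ({ℓ} : Finset (Fin n)) := by rw [← hLs]; exact x.2
            simpa using h6)
        subst hx
        exact hvr
  have hdetφ : (J.map φ).det ≠ 0 := by
    intro h0
    obtain ⟨v, hv0, hv⟩ := Matrix.exists_mulVec_eq_zero_iff.2 h0
    exact hv0 (hker v hv)
  have hdetJ : J.det ≠ 0 := by
    intro h0
    exact hdetφ (by rw [← RingHom.mapMatrix_apply, ← RingHom.map_det, h0, map_zero])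
  have hdetA : (J.map (algebraMap (MvPolynomial (Fin n ⊕ {i : Fin n // i ∈ L}) ℝ) (FractionRing (MvPolynomial (Fin n ⊕ {i : Fin n // i ∈ L}) ℝ)))).det ≠ 0 := by
    rw [← RingHom.mapMatrix_apply, ← RingHom.map_det]
    intro h0
    exact hdetJ (IsFractionRing.injective (MvPolynomial (Fin n ⊕ {i : Fin n // i ∈ L}) ℝ) (FractionRing (MvPolynomial (Fin n ⊕ {i : Fin n // i ∈ L}) ℝ)) (by rw [h0, map_zero]))
  have hAunit : IsUnit (J.map (algebraMap (MvPolynomial (Fin n ⊕ {i : Fin n // i ∈ L}) ℝ) (FractionRing (MvPolynomial (Fin n ⊕ {i : Fin n // i ∈ L}) ℝ)))) :=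
    (Matrix.isUnit_iff_isUnit_det _).2 (Ne.isUnit hdetA)
  have hArank : (J.map (algebraMap (MvPolynomial (Fin n ⊕ {i : Fin n // i ∈ L}) ℝ) (FractionRing (MvPolynomial (Fin n ⊕ {i : Fin n // i ∈ L}) ℝ)))).rank = n + L.card := by
    rw [Matrix.rank_of_isUnit _ hAunit, hcard]
  have hsubeq : M.submatrix rowsel (Equiv.refl (Fin n ⊕ {i : Fin n // i ∈ L}))
      = J.map (algebraMap (MvPolynomial (Fin n ⊕ {i : Fin n // i ∈ L}) ℝ) (FractionRing (MvPolynomial (Fin n ⊕ {i : Fin n // i ∈ L}) ℝ))) := by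
    ext r w
    simp [hM, hJ, Matrix.submatrix_apply, Matrix.map_apply]
  have hsub : (M.submatrix rowsel (Equiv.refl (Fin n ⊕ {i : Fin n // i ∈ L}))).rank ≤ M.rank := by
    rw [Matrix.rank, Matrix.rank, Matrix.mulVecLin_submatrix]
    simp only [Equiv.refl_symm, Equiv.coe_refl, LinearMap.funLeft_id, LinearMap.comp_id]
    exact le_trans (le_of_eq (congrArg (fun S : Submodule _ _ => Module.finrank _ S)
      (LinearMap.range_comp _ _))) ((Submodule.finrank_map_le _ _).trans
        (Submodule.finrank_mono (LinearMap.range_comp_le_range _ _)))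
  calc (n : ℕ) + L.card = (J.map (algebraMap (MvPolynomial (Fin n ⊕ {i : Fin n // i ∈ L}) ℝ) (FractionRing (MvPolynomial (Fin n ⊕ {i : Fin n // i ∈ L}) ℝ)))).rank := hArank.symm
    _ = (M.submatrix rowsel (Equiv.refl _)).rank := by rw [hsubeq]
    _ ≤ M.rank := hsub

lemma colDiff {n : ℕ} (hn : 3 ≤ n) {L : Finset (Fin n)} {ℓ : Fin n} (h : ℓ ∈ L)
    (m : Fin (2 * n)) :
    X (Sum.inl ℓ) * (pderiv (Sum.inl ℓ) (coeffs9 n L m)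
        - pderiv (Sum.inr ⟨ℓ, h⟩) (coeffs9 n L m))
      = - (if m.1 = n - 1 then ∏ i : Fin n, (X (Sum.inl i) :
          MvPolynomial (Fin n ⊕ {i : Fin n // i ∈ L}) ℝ) else 0) := by
  have hcmp : cmp9 (Sum.inl ℓ : Fin n ⊕ {i : Fin n // i ∈ L}) = ℓ := rfl
  have hcmp' : cmp9 (Sum.inr ⟨ℓ, h⟩ : Fin n ⊕ {i : Fin n // i ∈ L}) = ℓ := rfl
  rw [coeffs9]
  split_ifs with h1 h2 h3
  · omega
  · rw [pderiv_esymOn_z9 _ _ (by omega), pderiv_esymOn_z9 _ _ (by omega), hcmp, hcmp']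
    simp [sub_self]
  · rw [map_sub, map_sub, pderiv_esymOn_z9 _ _ (by omega : 1 ≤ n),
      pderiv_esymOn_z9 _ _ (by omega : 1 ≤ n), hcmp, hcmp', pderiv_prodX9, pderiv_prodX9]
    simp only [Sum.elim_inl, Sum.elim_inr, if_pos (show (m:ℕ) = n - 1 by omega)]
    have : (if ℓ ∈ Finset.univ then esymOn (Finset.univ.erase ℓ) (n-1) (z9 n L) else 0)
        - ∏ j ∈ Finset.univ.erase ℓ, (X (Sum.inl j) :
          MvPolynomial (Fin n ⊕ {i : Fin n // i ∈ L}) ℝ)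
        - ((if ℓ ∈ Finset.univ then esymOn (Finset.univ.erase ℓ) (n-1) (z9 n L) else 0) - 0)
        = - ∏ j ∈ Finset.univ.erase ℓ, X (Sum.inl j) := by ring
    rw [this, mul_neg]
    congr 1
    exact Finset.mul_prod_erase Finset.univ (fun i => (X (Sum.inl i) :
      MvPolynomial (Fin n ⊕ {i : Fin n // i ∈ L}) ℝ)) (Finset.mem_univ ℓ)
  · simp [sub_self]
  · have hm1 : 1 ≤ m.1 - n := by omega
    rw [pderiv_esymOn_z9 _ _ hm1, pderiv_esymOn_z9 _ _ hm1, hcmp, hcmp']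
    simp [sub_self]

lemma partA {n : ℕ} (hn : 3 ≤ n) {L : Finset (Fin n)} (hL : 2 ≤ L.card) :
    (Matrix.of fun (m : Fin (2 * n)) (v : Fin n ⊕ {i : Fin n // i ∈ L}) =>
        algebraMap (MvPolynomial (Fin n ⊕ {i : Fin n // i ∈ L}) ℝ)
          (FractionRing (MvPolynomial (Fin n ⊕ {i : Fin n // i ∈ L}) ℝ))
          (pderiv v (coeffs9 n L m))).rank < n + L.card := by
  classical
  set Rg := MvPolynomial (Fin n ⊕ {i : Fin n // i ∈ L}) ℝ with hRg
  set K := FractionRing Rg with hK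
  set M : Matrix (Fin (2 * n)) (Fin n ⊕ {i : Fin n // i ∈ L}) K :=
    Matrix.of fun (m : Fin (2 * n)) (v : Fin n ⊕ {i : Fin n // i ∈ L}) =>
      algebraMap Rg K (pderiv v (coeffs9 n L m)) with hM
  obtain ⟨ℓ₁, h1, ℓ₂, h2, hne⟩ := Finset.one_lt_card.1 (by omega : 1 < L.card)
  -- the kernel vector
  set cval : (Fin n ⊕ {i : Fin n // i ∈ L}) → Rg := fun w =>
    Sum.elim (fun i => if i = ℓ₁ then X (Sum.inl ℓ₁) else
        if i = ℓ₂ then - X (Sum.inl ℓ₂) else 0)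
      (fun x => if x.1 = ℓ₁ then - X (Sum.inl ℓ₁) else
        if x.1 = ℓ₂ then X (Sum.inl ℓ₂) else 0) w with hcval
  set c : (Fin n ⊕ {i : Fin n // i ∈ L}) → K := fun w => algebraMap Rg K (cval w) with hc
  have hrow : M.mulVec c = 0 := by
    funext m
    show ∑ w, M m w * c w = 0
    have : ∀ w, M m w * c w = algebraMap Rg K (pderiv w (coeffs9 n L m) * cval w) := by
      intro w; rw [map_mul]; rfl
    rw [Finset.sum_congr rfl fun w _ => this w, ← map_sum]
    have hsum : ∑ w : (Fin n ⊕ {i : Fin n // i ∈ L}), pderiv w (coeffs9 n L m) * cval w = 0 := by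
      rw [Fintype.sum_sum_type]
      have e1 : ∑ i : Fin n, pderiv (Sum.inl i) (coeffs9 n L m) * cval (Sum.inl i)
          = pderiv (Sum.inl ℓ₁) (coeffs9 n L m) * X (Sum.inl ℓ₁)
            + pderiv (Sum.inl ℓ₂) (coeffs9 n L m) * (- X (Sum.inl ℓ₂)) := by
        rw [Finset.sum_eq_add_of_mem ℓ₁ ℓ₂ (Finset.mem_univ _) (Finset.mem_univ _) hne]
        · simp [hcval, hne, Ne.symm hne]
        · intro i _ hi
          simp [hcval, hi.1, hi.2]
      have e2 : ∑ x : {i : Fin n // i ∈ L}, pderiv (Sum.inr x) (coeffs9 n L m) * cval (Sum.inr x)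
          = pderiv (Sum.inr ⟨ℓ₁, h1⟩) (coeffs9 n L m) * (- X (Sum.inl ℓ₁))
            + pderiv (Sum.inr ⟨ℓ₂, h2⟩) (coeffs9 n L m) * X (Sum.inl ℓ₂) := by
        have hne' : (⟨ℓ₁, h1⟩ : {i : Fin n // i ∈ L}) ≠ ⟨ℓ₂, h2⟩ := by
          intro hc'; exact hne (congrArg Subtype.val hc')
        rw [Finset.sum_eq_add_of_mem _ _ (Finset.mem_univ _) (Finset.mem_univ _) hne']
        · simp [hcval, hne, Ne.symm hne]
        · intro x _ hx
          have hx1 : x.1 ≠ ℓ₁ := fun hc' => hx.1 (Subtype.ext hc')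
          have hx2 : x.1 ≠ ℓ₂ := fun hc' => hx.2 (Subtype.ext hc')
          simp [hcval, hx1, hx2]
      rw [e1, e2]
      have d1 := colDiff hn h1 m
      have d2 := colDiff hn h2 m
      have : X (Sum.inl ℓ₁) * (pderiv (Sum.inl ℓ₁) (coeffs9 n L m)
            - pderiv (Sum.inr ⟨ℓ₁, h1⟩) (coeffs9 n L m))
          = X (Sum.inl ℓ₂) * (pderiv (Sum.inl ℓ₂) (coeffs9 n L m)
            - pderiv (Sum.inr ⟨ℓ₂, h2⟩) (coeffs9 n L m)) := by rw [d1, d2]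
      linear_combination this
    rw [hsum, map_zero]
  have hcne : c ≠ 0 := by
    intro hc0
    have := congrFun hc0 (Sum.inl ℓ₁)
    simp only [hc, Pi.zero_apply] at this
    have hx : (X (Sum.inl ℓ₁) : Rg) ≠ 0 := MvPolynomial.X_ne_zero _
    have hinj := IsFractionRing.injective Rg K
    apply hx
    apply hinj
    rw [map_zero]
    simpa [hcval] using this
  -- rank deficiency
  have hker : c ∈ LinearMap.ker M.mulVecLin := by
    rw [LinearMap.mem_ker, Matrix.mulVecLin_apply, hrow]
  have hdim := LinearMap.finrank_range_add_finrank_ker M.mulVecLin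
  rw [Module.finrank_fintype_fun_eq_card] at hdim
  have hcard : Fintype.card (Fin n ⊕ {i : Fin n // i ∈ L}) = n + L.card := by
    simp [Fintype.card_sum, Fintype.card_coe]
  have hkerpos : 0 < Module.finrank K (LinearMap.ker M.mulVecLin) := by
    rcases Nat.eq_zero_or_pos (Module.finrank K (LinearMap.ker M.mulVecLin)) with h0 | h
    · exfalso
      rw [Submodule.finrank_eq_zero] at h0
      rw [h0, Submodule.mem_bot] at hker
      exact hcne hker
    · exact h
  have : M.rank + Module.finrank K (LinearMap.ker M.mulVecLin) = n + L.card := by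
    rw [Matrix.rank, hdim] at *
    omega
  omega

/-- The cycle model with input and output both in compartment `1` and leak set `L` is
generically locally identifiable iff `|L| ≤ 1`: the Jacobian of its coefficient map with
respect to the `n + |L|` variables, viewed over the field of rational functions, has full
rank `n + |L|` if and only if `|L| ≤ 1`. -/
theorem stmt9 (n : ℕ) (hn : 3 ≤ n) (L : Finset (Fin n)) :
    (Matrix.of fun (m : Fin (2 * n)) (v : Fin n ⊕ {i : Fin n // i ∈ L}) =>
        algebraMap (MvPolynomial (Fin n ⊕ {i : Fin n // i ∈ L}) ℝ)
          (FractionRing (MvPolynomial (Fin n ⊕ {i : Fin n // i ∈ L}) ℝ))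
          (pderiv v (coeffs9 n L m))).rank = n + L.card ↔ L.card ≤ 1 := by
  constructor
  · intro hr
    by_contra hcon
    push_neg at hcon
    exact absurd hr (Nat.ne_of_lt (partA hn (by omega)))
  · exact fun hL => partB hn hL
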